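/- If the weight array w_{n,k} satisfies the recurrence w_{n+1,k} = α_{k-1} w_{n,k-1} + γ_k w_{n,k} + β_k w_{n,k+1} with w_{0,0}=1 and w_{n,k}=0 for k<0 or k>n, where α_k = a·k+α₀, β_k = b·k+β₀, γ_k = c·k+γ₀, then the polynomials P_n(x) = Σ_{k=0}^n w_{n,k} x^k satisfy P_{n+1}(x) = (a x² + c x + b) P_n'(x) + (α₀ x + γ₀) P_n(x) + (β₀ - b)·(P_n(x) - P_n(0))/x. -/

import Mathlib

open Finset

/-- Weighted Motzkin paths with linearly varying multiplicities:
the polynomials `P_n(x) = ∑_{k=0}^n w_{n,k} x^k` satisfy the recurrence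
`P_{n+1}(x) = (a x² + c x + b) P_n'(x) + (α₀ x + γ₀) P_n(x) + (β₀ - b)(P_n(x) - P_n(0))/x`. -/
theorem stmt_0 (a b c α₀ β₀ γ₀ : ℝ)
    (w : ℕ → ℤ → ℝ)
    (h0 : w 0 0 = 1)
    (hz : ∀ (n : ℕ) (k : ℤ), (k < 0 ∨ (n : ℤ) < k) → w n k = 0)
    (hrec : ∀ (n : ℕ) (k : ℤ),
      w (n + 1) k = (((k : ℝ) - 1) * a + α₀) * w n (k - 1)
        + ((k : ℝ) * c + γ₀) * w n k
        + ((k : ℝ) * b + β₀) * w n (k + 1))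
    (P : ℕ → ℝ → ℝ)
    (hP : ∀ (n : ℕ) (x : ℝ), P n x = ∑ k ∈ Finset.range (n + 1), w n k * x ^ k) :
    ∀ (n : ℕ) (x : ℝ), x ≠ 0 →
      P (n + 1) x = (a * x ^ 2 + c * x + b) * deriv (P n) x
        + (α₀ * x + γ₀) * P n x
        + (β₀ - b) * (P n x - P n 0) / x := by
  intro n x hx
  have hwneg : w n (-1) = 0 := hz n (-1) (Or.inl (by norm_num))
  have hwt1 : w n ((n : ℤ) + 1) = 0 := hz n _ (Or.inr (by linarith))
  have hwt2 : w n ((n : ℤ) + 2) = 0 := hz n _ (Or.inr (by linarith))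
  -- value at 0
  have hP0 : P n 0 = w n 0 := by
    rw [hP]
    rw [Finset.sum_eq_single 0]
    · simp
    · intro k _ hk
      simp [zero_pow hk]
    · simp
  -- derivative
  have hdiff : ∀ k : ℕ, DifferentiableAt ℝ (fun y : ℝ => w n k * y ^ k) x :=
    fun k => ((differentiable_pow k).differentiableAt).const_mul _
  have hderiv : deriv (P n) x
      = ∑ k ∈ Finset.range (n + 1), w n k * ((k : ℝ) * x ^ (k - 1)) := by
    have hfun : P n = fun y => ∑ k ∈ Finset.range (n + 1), w n k * y ^ k :=
      funext (hP n)
    rw [hfun, deriv_fun_sum (fun k _ => hdiff k)]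
    refine Finset.sum_congr rfl fun k _ => ?_
    rw [deriv_const_mul _ ((differentiable_pow k).differentiableAt), deriv_pow_field]
  have hDx : deriv (P n) x * x
      = ∑ k ∈ Finset.range (n + 1), (k : ℝ) * w n k * x ^ k := by
    rw [hderiv, Finset.sum_mul]
    refine Finset.sum_congr rfl fun k _ => ?_
    cases k with
    | zero => simp
    | succ m =>
      simp only [Nat.add_sub_cancel]
      push_cast
      rw [pow_succ]
      ring
  -- the three canonical sums
  set SA : ℝ := ∑ k ∈ Finset.range (n + 1),
      ((k : ℝ) * a + α₀) * w n k * x ^ (k + 2) with hSA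
  set SB : ℝ := ∑ k ∈ Finset.range (n + 1),
      ((k : ℝ) * c + γ₀) * w n k * x ^ (k + 1) with hSB
  set SC : ℝ := ∑ k ∈ Finset.range n,
      ((k : ℝ) * b + β₀) * w n ((k : ℤ) + 1) * x ^ (k + 1) with hSC
  -- left side
  have hL : P (n + 1) x * x = SA + SB + SC := by
    rw [hP (n + 1) x, Finset.sum_mul]
    have step : ∀ k ∈ Finset.range (n + 1 + 1),
        w (n + 1) (k : ℤ) * x ^ k * x
          = (((k : ℝ) - 1) * a + α₀) * w n ((k : ℤ) - 1) * x ^ k * x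
            + ((k : ℝ) * c + γ₀) * w n (k : ℤ) * x ^ k * x
            + ((k : ℝ) * b + β₀) * w n ((k : ℤ) + 1) * x ^ k * x := by
      intro k _
      rw [hrec]
      push_cast
      ring
    rw [Finset.sum_congr rfl step, Finset.sum_add_distrib, Finset.sum_add_distrib]
    have hA : (∑ k ∈ Finset.range (n + 1 + 1),
        (((k : ℝ) - 1) * a + α₀) * w n ((k : ℤ) - 1) * x ^ k * x) = SA := by
      rw [Finset.sum_range_succ']
      simp only [Nat.cast_zero, Int.ofNat_eq_coe]
      norm_num [hwneg]
      refine Finset.sum_congr rfl fun k _ => ?_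
      have h1 : ((k : ℤ) + 1 - 1) = (k : ℤ) := by ring
      push_cast [h1]
      rw [pow_succ, pow_succ]
      ring
    have hB : (∑ k ∈ Finset.range (n + 1 + 1),
        ((k : ℝ) * c + γ₀) * w n (k : ℤ) * x ^ k * x) = SB := by
      rw [Finset.sum_range_succ]
      push_cast [hwt1]
      norm_num
      refine Finset.sum_congr rfl fun k _ => ?_
      rw [pow_succ]
      ring
    have hC : (∑ k ∈ Finset.range (n + 1 + 1),
        ((k : ℝ) * b + β₀) * w n ((k : ℤ) + 1) * x ^ k * x) = SC := by
      rw [Finset.sum_range_succ, Finset.sum_range_succ]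
      have e1 : ((n : ℤ) + 1 + 1) = (n : ℤ) + 2 := by ring
      push_cast [e1, hwt1, hwt2]
      norm_num
      refine Finset.sum_congr rfl fun k _ => ?_
      rw [pow_succ]
      ring
    rw [hA, hB, hC]
  -- right side
  have hR : ((a * x ^ 2 + c * x + b) * deriv (P n) x
        + (α₀ * x + γ₀) * P n x) * x
        + (β₀ - b) * (P n x - P n 0) = SA + SB + SC := by
    have hPnx := hP n x
    have expand : ((a * x ^ 2 + c * x + b) * deriv (P n) x
        + (α₀ * x + γ₀) * P n x) * x + (β₀ - b) * (P n x - P n 0)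
        = (a * x ^ 2) * (deriv (P n) x * x) + (c * x) * (deriv (P n) x * x)
          + b * (deriv (P n) x * x)
          + (α₀ * x ^ 2) * P n x + (γ₀ * x) * P n x
          + (β₀ - b) * P n x - (β₀ - b) * w n 0 := by
      rw [hP0]; ring
    rw [expand, hDx, hPnx]
    have hA : (a * x ^ 2) * (∑ k ∈ Finset.range (n + 1), (k : ℝ) * w n k * x ^ k)
        + (α₀ * x ^ 2) * (∑ k ∈ Finset.range (n + 1), w n k * x ^ k) = SA := by
      rw [Finset.mul_sum, Finset.mul_sum, ← Finset.sum_add_distrib]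
      refine Finset.sum_congr rfl fun k _ => ?_
      rw [show k + 2 = k + 1 + 1 from rfl, pow_succ, pow_succ]
      ring
    have hB : (c * x) * (∑ k ∈ Finset.range (n + 1), (k : ℝ) * w n k * x ^ k)
        + (γ₀ * x) * (∑ k ∈ Finset.range (n + 1), w n k * x ^ k) = SB := by
      rw [Finset.mul_sum, Finset.mul_sum, ← Finset.sum_add_distrib]
      refine Finset.sum_congr rfl fun k _ => ?_
      rw [pow_succ]
      ring
    have hC : b * (∑ k ∈ Finset.range (n + 1), (k : ℝ) * w n k * x ^ k)
        + (β₀ - b) * (∑ k ∈ Finset.range (n + 1), w n k * x ^ k)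
        - (β₀ - b) * w n 0 = SC := by
      rw [Finset.mul_sum, Finset.mul_sum, ← Finset.sum_add_distrib,
        Finset.sum_range_succ']
      push_cast
      norm_num
      refine Finset.sum_congr rfl fun k _ => ?_
      push_cast
      ring
    calc (a * x ^ 2) * (∑ k ∈ Finset.range (n + 1), (k : ℝ) * w n k * x ^ k)
          + (c * x) * (∑ k ∈ Finset.range (n + 1), (k : ℝ) * w n k * x ^ k)
          + b * (∑ k ∈ Finset.range (n + 1), (k : ℝ) * w n k * x ^ k)
          + (α₀ * x ^ 2) * (∑ k ∈ Finset.range (n + 1), w n k * x ^ k)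
          + (γ₀ * x) * (∑ k ∈ Finset.range (n + 1), w n k * x ^ k)
          + (β₀ - b) * (∑ k ∈ Finset.range (n + 1), w n k * x ^ k)
          - (β₀ - b) * w n 0
        = ((a * x ^ 2) * (∑ k ∈ Finset.range (n + 1), (k : ℝ) * w n k * x ^ k)
          + (α₀ * x ^ 2) * (∑ k ∈ Finset.range (n + 1), w n k * x ^ k))
          + ((c * x) * (∑ k ∈ Finset.range (n + 1), (k : ℝ) * w n k * x ^ k)
          + (γ₀ * x) * (∑ k ∈ Finset.range (n + 1), w n k * x ^ k))
          + (b * (∑ k ∈ Finset.range (n + 1), (k : ℝ) * w n k * x ^ k)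
          + (β₀ - b) * (∑ k ∈ Finset.range (n + 1), w n k * x ^ k)
          - (β₀ - b) * w n 0) := by ring
      _ = SA + SB + SC := by rw [hA, hB, hC]
  have key : P (n + 1) x * x
      = ((a * x ^ 2 + c * x + b) * deriv (P n) x
        + (α₀ * x + γ₀) * P n x) * x
        + (β₀ - b) * (P n x - P n 0) := by rw [hL, hR]
  field_simp
  linear_combination key
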